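/- arXiv:2303.09910 — 4 statements merged into one kernel-verified Lean document; each statement's English description precedes it below -/
import Mathlib

section
/- For any configuration of points p_1,...,p_M in a convex compact set A ⊆ ℝ^D and any nondecreasing continuous function g: ℝ≥0 → ℝ≥0 and any density φ: A → ℝ≥0, the Voronoi partition induced by p minimizes the locational optimization cost among all partitions: for any measurable partition O_1,...,O_M of A, the sum ∑_i ∫_{Voronoi cell W_{p,i}} g(‖q - p_i‖) φ(q) dq ≤ ∑_i ∫_{O_i} g(‖q - p_i‖) φ(q) dq. -/
open MeasureTheory

noncomputable section

private lemma integrable_finset_inf' {α : Type*} [MeasurableSpace α] {μ : Measure α} {ι : Type*}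
    (s : Finset ι) (hs : s.Nonempty) (f : ι → α → ℝ)
    (hf : ∀ i ∈ s, Integrable (f i) μ) :
    Integrable (fun x => s.inf' hs (fun i => f i x)) μ := by
  induction hs using Finset.Nonempty.cons_induction with
  | singleton i => simpa using hf i (by simp)
  | cons i s his hs ih =>
      rw [show (fun x => (Finset.cons i s his).inf' (Finset.cons_nonempty his) fun j => f j x)
          = fun x => (f i x) ⊓ (s.inf' hs fun j => f j x) from
          funext fun x => Finset.inf'_cons hs _]
      exact (hf i (by simp)).inf (ih fun j hj => hf j (by simp [hj]))

private lemma sum_setIntegral_of_partition {α : Type*} [MeasurableSpace α] {μ : Measure α}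
    {M : ℕ} {A : Set α} (S : Fin M → Set α)
    (hSm : ∀ i, NullMeasurableSet (S i) μ) (hSsub : ∀ i, S i ⊆ A) (hcov : A ⊆ ⋃ i, S i)
    (hdisj : ∀ i j, i ≠ j → μ (S i ∩ S j) = 0)
    (h : α → ℝ) (hint : IntegrableOn h A μ) :
    ∫ x in A, h x ∂μ = ∑ i, ∫ x in S i, h x ∂μ := by
  have hU : ⋃ i, S i = A := subset_antisymm (Set.iUnion_subset hSsub) hcov
  rw [← hU, integral_iUnion_ae hSm (fun i j hij => hdisj i j hij) (hU ▸ hint), tsum_fintype]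

/-- The Voronoi cell of seed `p i` within the region `A`. -/
def voronoiCell {D M : ℕ} (A : Set (EuclideanSpace ℝ (Fin D)))
    (p : Fin M → EuclideanSpace ℝ (Fin D)) (i : Fin M) : Set (EuclideanSpace ℝ (Fin D)) :=
  {q ∈ A | ∀ j, j ≠ i → ‖q - p i‖ ≤ ‖q - p j‖}

/-- The Voronoi partition minimizes the locational optimization cost among all
measurable partitions of `A`. -/
theorem voronoi_minimizes_locational_cost (D M : ℕ)
    (A : Set (EuclideanSpace ℝ (Fin D))) (hAconv : Convex ℝ A) (hAcomp : IsCompact A)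
    (p : Fin M → EuclideanSpace ℝ (Fin D)) (hpA : ∀ i, p i ∈ A)
    (hpinj : Function.Injective p)
    (g : ℝ → ℝ) (hgcont : Continuous g) (hgmono : Monotone g)
    (hgnonneg : ∀ x : ℝ, 0 ≤ x → 0 ≤ g x)
    (φ : EuclideanSpace ℝ (Fin D) → ℝ) (hφnonneg : ∀ q ∈ A, 0 ≤ φ q)
    (hφint : IntegrableOn φ A)
    (hint : ∀ i, IntegrableOn (fun q => g ‖q - p i‖ * φ q) A)
    (O : Fin M → Set (EuclideanSpace ℝ (Fin D)))
    (hOmeas : ∀ i, MeasurableSet (O i)) (hOsub : ∀ i, O i ⊆ A)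
    (hOcover : A ⊆ ⋃ i, O i)
    (hOdisj : ∀ i j, i ≠ j → volume (O i ∩ O j) = 0) :
    ∑ i, ∫ q in voronoiCell A p i, g ‖q - p i‖ * φ q ≤
      ∑ i, ∫ q in O i, g ‖q - p i‖ * φ q := by
  rcases Nat.eq_zero_or_pos M with rfl | hM
  · simp
  haveI : Nonempty (Fin M) := Fin.pos_iff_nonempty.mp hM
  set W : Fin M → Set (EuclideanSpace ℝ (Fin D)) := voronoiCell A p with hW
  set m : EuclideanSpace ℝ (Fin D) → ℝ :=
    fun q => Finset.univ.inf' Finset.univ_nonempty (fun j => g ‖q - p j‖ * φ q) with hm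
  -- Voronoi cells are measurable
  have hWmeas : ∀ i, MeasurableSet (W i) := by
    intro i
    have : W i = A ∩ ⋂ j, ⋂ (_ : j ≠ i), {q | ‖q - p i‖ ≤ ‖q - p j‖} := by
      ext q
      simp [hW, voronoiCell, Set.mem_iInter]
    rw [this]
    exact (hAcomp.isClosed.inter (isClosed_iInter fun j => isClosed_iInter fun _ =>
      isClosed_le ((continuous_id.sub continuous_const).norm)
        ((continuous_id.sub continuous_const).norm))).measurableSet
  have hWsub : ∀ i, W i ⊆ A := fun i q hq => hq.1
  have hWcov : A ⊆ ⋃ i, W i := by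
    intro q hq
    obtain ⟨i, -, hi⟩ := Finset.exists_min_image Finset.univ
      (fun j => ‖q - p j‖) Finset.univ_nonempty
    exact Set.mem_iUnion.mpr ⟨i, hq, fun j _ => hi j (Finset.mem_univ j)⟩
  have hWdisj : ∀ i j, i ≠ j → volume (W i ∩ W j) = 0 := by
    intro i j hij
    have hpne : p i ≠ p j := fun h => hij (hpinj h)
    have hsub : W i ∩ W j ⊆ (AffineSubspace.perpBisector (p i) (p j) : Set _) := by
      rintro q ⟨⟨-, hi⟩, ⟨-, hj⟩⟩
      rw [SetLike.mem_coe, AffineSubspace.mem_perpBisector_iff_dist_eq,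
        dist_eq_norm, dist_eq_norm]
      exact le_antisymm (hi j (Ne.symm hij)) (hj i hij)
    have hne : AffineSubspace.perpBisector (p i) (p j) ≠ ⊤ := by
      intro h
      have hmem : p i ∈ AffineSubspace.perpBisector (p i) (p j) := h ▸ trivial
      rw [AffineSubspace.mem_perpBisector_iff_dist_eq, dist_self] at hmem
      exact hpne (dist_eq_zero.mp hmem.symm)
    exact measure_mono_null hsub (Measure.addHaar_affineSubspace volume _ hne)
  -- m equals the cost function on each Voronoi cell
  have hm_eq : ∀ i, ∀ q ∈ W i, m q = g ‖q - p i‖ * φ q := by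
    intro i q hq
    refine le_antisymm (Finset.inf'_le _ (Finset.mem_univ i))
      (Finset.le_inf' _ _ fun j _ => ?_)
    rcases eq_or_ne j i with rfl | hji
    · exact le_rfl
    · exact mul_le_mul_of_nonneg_right (hgmono (hq.2 j hji)) (hφnonneg q hq.1)
  have hmint : IntegrableOn m A := by
    exact integrable_finset_inf' Finset.univ Finset.univ_nonempty
      (fun j q => g ‖q - p j‖ * φ q) (fun j _ => hint j)
  calc ∑ i, ∫ q in W i, g ‖q - p i‖ * φ q
      = ∑ i, ∫ q in W i, m q :=
        Finset.sum_congr rfl fun i _ =>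
          setIntegral_congr_fun (hWmeas i) (fun q hq => (hm_eq i q hq).symm)
    _ = ∫ q in A, m q := (sum_setIntegral_of_partition W
          (fun i => (hWmeas i).nullMeasurableSet) hWsub hWcov hWdisj m hmint).symm
    _ = ∑ i, ∫ q in O i, m q := sum_setIntegral_of_partition O
          (fun i => (hOmeas i).nullMeasurableSet) hOsub hOcover hOdisj m hmint
    _ ≤ ∑ i, ∫ q in O i, g ‖q - p i‖ * φ q := by
        refine Finset.sum_le_sum fun i _ => setIntegral_mono_on
          (hmint.mono_set (hOsub i)) ((hint i).mono_set (hOsub i)) (hOmeas i)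
          (fun q _ => Finset.inf'_le _ (Finset.mem_univ i))
end
end

section
/- Let p_w ∈ A^M be a configuration with pairwise distances at least 2(r_max + ε), and let W_{p_w} be its Voronoi tessellation. If a configuration p satisfies p_i ∈ W_{p_w,i} ⊖ B_{r_max+ε} for all i (where ⊖ denotes Pontryagin/erosion by the closed ball of radius r_max+ε), then for each i, p_i ∈ W_{p,i} ⊖ B_{r_max+ε}, where W_p is the Voronoi tessellation of p. -/
open scoped InnerProductSpace


noncomputable section

/-- Pontryagin erosion of a set by the closed ball of radius `ρ`. -/
def erode {E : Type*} [NormedAddCommGroup E] (V : Set E) (ρ : ℝ) : Set E :=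
  {x | ∀ y : E, ‖y‖ ≤ ρ → x + y ∈ V}

/-- Lemma 1: if `p_w` has pairwise distances at least `2 (r_max + ε)` and each `p i`
lies in the erosion of the Voronoi cell `W_{p_w, i}` by the ball of radius `r_max + ε`,
then each `p i` lies in the erosion of its own Voronoi cell `W_{p, i}` by the same ball. -/
theorem eroded_voronoi_membership_preserved (D M : ℕ)
    (A : Set (EuclideanSpace ℝ (Fin D))) (hAconv : Convex ℝ A) (hAcomp : IsCompact A)
    (rmax ε : ℝ) (hr : 0 < rmax) (hε : 0 < ε)
    (pw p : Fin M → EuclideanSpace ℝ (Fin D))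
    (hsep : ∀ i j, i ≠ j → 2 * (rmax + ε) ≤ ‖pw i - pw j‖)
    (hmem : ∀ i, p i ∈ erode (voronoiCell A pw i) (rmax + ε)) :
    ∀ i, p i ∈ erode (voronoiCell A p i) (rmax + ε) := by
  set ρ := rmax + ε with hρdef
  have hρ : 0 < ρ := by positivity
  have expand : ∀ z a b : EuclideanSpace ℝ (Fin D), ‖z - a‖ ≤ ‖z - b‖ →
      2 * ⟪z, b - a⟫_ℝ ≤ ‖b‖^2 - ‖a‖^2 := by
    intro z a b h
    have h2 : ‖z - a‖^2 ≤ ‖z - b‖^2 := pow_le_pow_left₀ (norm_nonneg _) h 2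
    have e1 : ‖z - a‖^2 = ‖z‖^2 - 2*⟪z,a⟫_ℝ + ‖a‖^2 := norm_sub_sq_real z a
    have e2 : ‖z - b‖^2 = ‖z‖^2 - 2*⟪z,b⟫_ℝ + ‖b‖^2 := norm_sub_sq_real z b
    rw [inner_sub_right]
    linarith
  have hkey : ∀ i j, i ≠ j → 2 * ρ ≤ ‖p i - p j‖ := by
    intro i j hij
    set u : EuclideanSpace ℝ (Fin D) := pw j - pw i with hu
    have hun : 2 * ρ ≤ ‖u‖ := hsep j i (Ne.symm hij)
    have hupos : 0 < ‖u‖ := by linarith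
    have hnorm : ‖(ρ / ‖u‖) • u‖ ≤ ρ := by
      rw [norm_smul, Real.norm_eq_abs, abs_of_nonneg (by positivity),
        div_mul_cancel₀ _ (ne_of_gt hupos)]
    have hz := (hmem i ((ρ / ‖u‖) • u) hnorm).2 j (Ne.symm hij)
    have hnorm' : ‖(ρ / ‖u‖) • (-u)‖ ≤ ρ := by
      rwa [smul_neg, norm_neg]
    have hz' := (hmem j ((ρ / ‖u‖) • (-u)) hnorm').2 i hij
    have E1 := expand _ _ _ hz
    have E2 := expand _ _ _ hz'
    have hc : (ρ / ‖u‖) * ‖u‖^2 = ρ * ‖u‖ := by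
      field_simp
    have i1 : ⟪p i + (ρ / ‖u‖) • u, u⟫_ℝ = ⟪p i, u⟫_ℝ + ρ * ‖u‖ := by
      rw [inner_add_left, real_inner_smul_left, real_inner_self_eq_norm_sq, hc]
    have i2 : ⟪p j + (ρ / ‖u‖) • (-u), -u⟫_ℝ = -⟪p j, u⟫_ℝ + ρ * ‖u‖ := by
      rw [inner_add_left, real_inner_smul_left, inner_neg_neg, inner_neg_right, real_inner_self_eq_norm_sq, hc]
    have hneg : pw i - pw j = -u := by rw [hu]; abel
    rw [hu, i1] at E1
    rw [hneg, i2] at E2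
    have hcs : ⟪p j - p i, u⟫_ℝ ≤ ‖p j - p i‖ * ‖u‖ := real_inner_le_norm _ _
    rw [inner_sub_left] at hcs
    have hfin : 2 * ρ * ‖u‖ ≤ ‖p j - p i‖ * ‖u‖ := by nlinarith
    rw [norm_sub_rev]
    exact le_of_mul_le_mul_right hfin hupos
  intro i y hy
  refine ⟨(hmem i y hy).1, ?_⟩
  intro j hj
  have h1 : p i + y - p i = y := by abel
  have h2 : ‖p i - p j‖ ≤ ‖p i + y - p j‖ + ‖y‖ := by
    calc ‖p i - p j‖ = ‖(p i + y - p j) - y‖ := by rw [show (p i + y - p j) - y = p i - p j by abel]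
    _ ≤ ‖p i + y - p j‖ + ‖y‖ := norm_sub_le _ _
  rw [h1]
  have := hkey i j (Ne.symm hj)
  linarith
end
end

section
/- If the positions of all agents satisfy the eroded-Voronoi containment p_i ∈ W_{p,i} ⊖ B_{r_max} for all i at some time, then the collision-avoidance condition ‖p_i - p_j‖ ≥ 2 r_max holds for all i ≠ j. -/
noncomputable section

/-- If every agent's position lies in its Voronoi cell eroded by the ball of radius
`r_max`, then all agents are pairwise at distance at least `2 r_max`. -/
theorem eroded_voronoi_implies_collision_avoidance (D M : ℕ)
    (A : Set (EuclideanSpace ℝ (Fin D)))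
    (p : Fin M → EuclideanSpace ℝ (Fin D)) (hpinj : Function.Injective p)
    (rmax : ℝ) (hr : 0 ≤ rmax)
    (hmem : ∀ i, p i ∈ erode (voronoiCell A p i) rmax) :
    ∀ i j, i ≠ j → 2 * rmax ≤ ‖p i - p j‖ := by
  intro i j hij
  set d : ℝ := ‖p i - p j‖ with hd
  have hne : p i - p j ≠ 0 := sub_ne_zero.mpr (fun h => hij (hpinj h))
  have hdpos : 0 < d := norm_pos_iff.mpr hne
  set u : EuclideanSpace ℝ (Fin D) := d⁻¹ • (p j - p i) with hu
  have hunorm : ‖u‖ = 1 := by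
    rw [hu, norm_smul, norm_inv, Real.norm_eq_abs, abs_of_pos hdpos,
      ← norm_neg (p j - p i), neg_sub, ← hd]
    field_simp
  set y : EuclideanSpace ℝ (Fin D) := rmax • u with hy
  have hynorm : ‖y‖ = rmax := by
    rw [hy, norm_smul, hunorm, Real.norm_eq_abs, abs_of_nonneg hr, mul_one]
  have hcell := (hmem i) y (le_of_eq hynorm)
  have hle := hcell.2 j hij.symm
  have h1 : ‖p i + y - p i‖ = rmax := by
    rw [add_sub_cancel_left, hynorm]
  have h2 : ‖p i + y - p j‖ = |rmax - d| := by
    have hdu : d • u = p j - p i := by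
      rw [hu, smul_smul, mul_inv_cancel₀ (ne_of_gt hdpos), one_smul]
    have : p i + y - p j = (rmax - d) • u := by
      rw [hy, sub_smul, hdu]; abel
    rw [this, norm_smul, hunorm, mul_one, Real.norm_eq_abs]
  rw [h1, h2] at hle
  rcases abs_cases (rmax - d) with ⟨heq, _⟩ | ⟨heq, hneg⟩
  · rw [heq] at hle; linarith
  · rw [heq] at hle; linarith
end
end

section
/- (Exponential cost controllability implies relaxed dynamic programming decrease; scalar version.) Suppose a sequence of optimal value functions V_N satisfies V_N ≤ γ ℓ* for all N and ℓ* ≥ 0, with γ > 1. Define ᾱ_N = 1 - ((γ-1)/γ)^N · γ². Then for N large enough that ᾱ_N > 0, the inequality ℓ̂ ≤ ((γ-1)/γ)^{N-1} · V_N, combined with V_N-candidate cost increase at most (γ'-1)ℓ̂ − ℓ*, yields V_N(next) − V_N(current) ≤ −ᾱ_N ℓ*(current), where ℓ̂ denotes the terminal-step stage cost. In particular, 1 − ((γ−1)/γ)^N γ² > 0 for all N > 2 log γ / log(γ/(γ−1)). -/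
/-- Exponential cost controllability implies a relaxed dynamic programming decrease
(scalar version): from `(γ/(γ-1))^{N-1} ℓ̂ ≤ V_cur ≤ γ ℓ*` and the candidate-cost bound
`V_next - V_cur ≤ (γ - 1) ℓ̂ - ℓ*` one gets `V_next - V_cur ≤ -ᾱ_N ℓ*` with
`ᾱ_N = 1 - ((γ-1)/γ)^N γ²`; moreover `ᾱ_N > 0` for all `N > 2 log γ / log(γ/(γ-1))`. -/
theorem relaxed_dp_decrease (γ : ℝ) (hγ : 1 < γ) (N : ℕ)
    (ℓstar ℓhat Vcur Vnext : ℝ)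
    (hℓstar : 0 ≤ ℓstar) (hℓhat : 0 ≤ ℓhat)
    (h1 : ℓhat ≤ ((γ - 1) / γ) ^ (N - 1) * Vcur)
    (h2 : Vcur ≤ γ * ℓstar)
    (h3 : Vnext - Vcur ≤ (γ - 1) * ℓhat - ℓstar) :
    Vnext - Vcur ≤ -(1 - ((γ - 1) / γ) ^ N * γ ^ 2) * ℓstar ∧
      ∀ N' : ℕ, 2 * Real.log γ / Real.log (γ / (γ - 1)) < (N' : ℝ) →
        0 < 1 - ((γ - 1) / γ) ^ N' * γ ^ 2 := by
  have hγ0 : (0:ℝ) < γ := lt_trans one_pos hγ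
  have hr0 : 0 < (γ - 1) / γ := div_pos (by linarith) hγ0
  constructor
  · -- main decrease inequality
    have hkey : (γ - 1) * ℓhat ≤ ((γ - 1) / γ) ^ N * γ ^ 2 * ℓstar := by
      have hrp : 0 < ((γ - 1) / γ) ^ (N - 1) := pow_pos hr0 _
      have hA : (γ - 1) * ℓhat ≤ (γ - 1) * (((γ - 1) / γ) ^ (N - 1) * Vcur) := by
        apply mul_le_mul_of_nonneg_left h1 (by linarith)
      have hB : (γ - 1) * (((γ - 1) / γ) ^ (N - 1) * Vcur)
          ≤ (γ - 1) * (((γ - 1) / γ) ^ (N - 1) * (γ * ℓstar)) := by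
        apply mul_le_mul_of_nonneg_left _ (by linarith)
        exact mul_le_mul_of_nonneg_left h2 (le_of_lt hrp)
      rcases Nat.eq_zero_or_pos N with hN | hN
      · subst hN
        simp only [Nat.zero_sub, pow_zero] at *
        nlinarith
      · have hNe : N = (N - 1) + 1 := (Nat.succ_pred_eq_of_pos hN).symm
        have heq : ((γ - 1) / γ) ^ N * γ ^ 2
            = (γ - 1) * (((γ - 1) / γ) ^ (N - 1) * γ) := by
          rw [hNe, Nat.add_sub_cancel, pow_succ]
          field_simp
        rw [heq]
        calc (γ - 1) * ℓhat ≤ (γ - 1) * (((γ - 1) / γ) ^ (N - 1) * (γ * ℓstar)) :=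
              le_trans hA hB
          _ = (γ - 1) * (((γ - 1) / γ) ^ (N - 1) * γ) * ℓstar := by ring
    linarith
  · intro N' hN'
    have hq : 1 < γ / (γ - 1) := by
      rw [lt_div_iff₀ (by linarith)]; linarith
    have hL : 0 < Real.log (γ / (γ - 1)) := Real.log_pos hq
    have h2log : 2 * Real.log γ < (N' : ℝ) * Real.log (γ / (γ - 1)) := by
      rw [div_lt_iff₀ hL] at hN'; linarith
    have hpow : γ ^ 2 < (γ / (γ - 1)) ^ N' := by
      have hγ2 : (0:ℝ) < γ ^ 2 := by positivity
      have hqN : (0:ℝ) < (γ / (γ - 1)) ^ N' := by positivity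
      rw [← Real.log_lt_log_iff hγ2 hqN, Real.log_pow, Real.log_pow]
      push_cast
      linarith
    have hrp : 0 < ((γ - 1) / γ) ^ N' := pow_pos hr0 _
    have hprod : ((γ - 1) / γ) ^ N' * (γ / (γ - 1)) ^ N' = 1 := by
      rw [← mul_pow]
      rw [div_mul_div_comm]
      rw [show (γ - 1) * γ = γ * (γ - 1) by ring]
      rw [div_self (ne_of_gt (by nlinarith : (0:ℝ) < γ * (γ - 1)))]
      simp
    nlinarith [mul_lt_mul_of_pos_left hpow hrp]
end
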